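/- arXiv:2504.11161 — 4 statements merged into one kernel-verified Lean document; each statement's English description precedes it below -/
import Mathlib

section
/- Let X be a finite-dimensional real Banach space. If a nonzero linear operator T : X → X preserves Birkhoff-James orthogonality at each extreme point of the closed unit ball of X, then T is bijective. -/
open Metric Filter Set

/-- Birkhoff-James orthogonality. -/
def BJOrth {X : Type*} [NormedAddCommGroup X] [NormedSpace ℝ X] (u v : X) : Prop :=
  ∀ lam : ℝ, ‖u‖ ≤ ‖u + lam • v‖

/-- Set of norm-one supporting functionals at a point. -/
def SuppFunc {X : Type*} [NormedAddCommGroup X] [NormedSpace ℝ X] (x : X) :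
    Set (StrongDual ℝ X) := {f | ‖f‖ = 1 ∧ f x = ‖x‖}

/-- A nonzero point is smooth if it has a unique norm-one supporting functional. -/
def SmoothPt {X : Type*} [NormedAddCommGroup X] [NormedSpace ℝ X] (x : X) : Prop :=
  x ≠ 0 ∧ ∃! f : StrongDual ℝ X, f ∈ SuppFunc x

/-- `T` preserves Birkhoff-James orthogonality at `x`. -/
def PreservesBJAt {X Y : Type*} [NormedAddCommGroup X] [NormedSpace ℝ X]
    [NormedAddCommGroup Y] [NormedSpace ℝ Y] (T : X →L[ℝ] Y) (x : X) : Prop :=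
  ∀ v : X, BJOrth x v → BJOrth (T x) (T v)

theorem stmt_13 {X : Type*} [NormedAddCommGroup X] [NormedSpace ℝ X] [FiniteDimensional ℝ X]
    (T : X →L[ℝ] X) (hT : T ≠ 0)
    (hpres : ∀ x ∈ (Metric.closedBall (0 : X) 1).extremePoints ℝ, PreservesBJAt T x) :
    Function.Bijective T := by
  have hker : ∀ w : X, T w = 0 → w = 0 := by
    intro w hw
    by_contra hw0
    -- a vector not killed by `T`
    obtain ⟨v, hv⟩ : ∃ v : X, T v ≠ 0 := by
      by_contra h; push_neg at h
      exact hT (ContinuousLinearMap.ext fun v => by simp [h v])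
    have hvnorm : 0 < ‖v‖ := norm_pos_iff.mpr (fun h => hv (by simp [h]))
    have hwn : 0 < ‖w‖ := norm_pos_iff.mpr hw0
    set w' : X := ‖w‖⁻¹ • w with hw'def
    have hw'1 : ‖w'‖ = 1 := by
      rw [hw'def, norm_smul, norm_inv, norm_norm, inv_mul_cancel₀ hwn.ne']
    have hTw' : T w' = 0 := by rw [hw'def, map_smul, hw, smul_zero]
    clear_value w'
    set ε : ℝ := (3 * ‖v‖)⁻¹ with hεdef
    have hε : 0 < ε := by positivity
    have hεv : ‖ε • v‖ = 1/3 := by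
      rw [norm_smul, Real.norm_eq_abs, abs_of_pos hε, hεdef]
      field_simp
    set u₀ : X := w' + ε • v with hu₀def
    have hu₀ : 2/3 ≤ ‖u₀‖ := by
      have h1 : ‖w'‖ ≤ ‖u₀‖ + ‖ε • v‖ := by
        have : w' = u₀ - ε • v := by rw [hu₀def]; abel
        rw [this]; exact norm_sub_le _ _
      rw [hw'1, hεv] at h1; linarith
    have hu₀ne : u₀ ≠ 0 := by
      intro h; rw [h, norm_zero] at hu₀; linarith
    obtain ⟨f, hf1, hfu₀⟩ := exists_dual_vector ℝ u₀ (norm_ne_zero_iff.mpr hu₀ne)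
    have hfu₀' : f u₀ = ‖u₀‖ := by exact_mod_cast hfu₀
    have fbound : ∀ x : X, f x ≤ ‖x‖ := by
      intro x
      calc f x ≤ |f x| := le_abs_self _
        _ = ‖f x‖ := (Real.norm_eq_abs _).symm
        _ ≤ ‖f‖ * ‖x‖ := f.le_opNorm x
        _ = ‖x‖ := by rw [hf1, one_mul]
    have hu₀pos : 0 < ‖u₀‖ := by linarith
    set u : X := ‖u₀‖⁻¹ • u₀ with hudef
    have hu1 : ‖u‖ = 1 := by
      rw [hudef, norm_smul, norm_inv, norm_norm, inv_mul_cancel₀ hu₀pos.ne']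
    have hfu : f u = 1 := by
      rw [hudef, map_smul, smul_eq_mul, hfu₀', inv_mul_cancel₀ hu₀pos.ne']
    set F : Set X := {x ∈ closedBall (0 : X) 1 | ∀ y ∈ closedBall (0 : X) 1, f y ≤ f x}
      with hFdef
    have huF : u ∈ F := by
      constructor
      · exact mem_closedBall_zero_iff.mpr hu1.le
      · intro y hy
        have : f y ≤ ‖y‖ := fbound y
        have h2 : ‖y‖ ≤ 1 := mem_closedBall_zero_iff.mp hy
        rw [hfu]; linarith
    have hexp : IsExposed ℝ (closedBall (0 : X) 1) F := fun _ => ⟨f, rfl⟩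
    have hFcomp : IsCompact F := hexp.isCompact (isCompact_closedBall _ _)
    have hFconv : Convex ℝ F := hexp.convex (convex_closedBall _ _)
    have hKM : closure (convexHull ℝ (F.extremePoints ℝ)) = F :=
      closure_convexHull_extremePoints hFcomp hFconv
    -- the kernel as a closed convex set
    set K : Set X := {x : X | T x = 0} with hKdef
    have hKconv : Convex ℝ K := by
      intro x hx y hy a b _ _ _
      simp only [hKdef, mem_setOf_eq] at hx hy ⊢
      rw [map_add, map_smul, map_smul, hx, hy, smul_zero, smul_zero, add_zero]
    have hKclosed : IsClosed K := by
      have : K = T ⁻¹' {0} := by ext x; simp [hKdef]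
      rw [this]; exact isClosed_singleton.preimage T.continuous
    -- there is an extreme point of F outside the kernel
    obtain ⟨e, heF, hTe⟩ : ∃ e ∈ F.extremePoints ℝ, T e ≠ 0 := by
      by_contra h; push_neg at h
      have hsub : F.extremePoints ℝ ⊆ K := fun x hx => h x hx
      have : F ⊆ K := by
        rw [← hKM]
        exact closure_minimal (convexHull_min hsub hKconv) hKclosed
      have hTu : T u = 0 := this huF
      have hTu₀ : T u₀ = 0 := by
        have : T u = ‖u₀‖⁻¹ • T u₀ := by rw [hudef, map_smul]
        rw [hTu] at this
        have := (smul_eq_zero.mp this.symm).resolve_left (by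
          simpa using hu₀pos.ne')
        exact this
      rw [hu₀def, map_add, hTw', zero_add, map_smul] at hTu₀
      exact hv ((smul_eq_zero.mp hTu₀).resolve_left hε.ne')
    have heB : e ∈ (closedBall (0 : X) 1).extremePoints ℝ :=
      hexp.isExtreme.extremePoints_subset_extremePoints heF
    have heF' : e ∈ F := extremePoints_subset heF
    have hfe : f e = 1 := by
      have h1 : f u ≤ f e := heF'.2 u (mem_closedBall_zero_iff.mpr hu1.le)
      have h2 : f e ≤ ‖e‖ := fbound e
      have h3 : ‖e‖ ≤ 1 := mem_closedBall_zero_iff.mp heF'.1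
      rw [hfu] at h1; linarith
    have he1 : ‖e‖ = 1 := by
      have h2 : f e ≤ ‖e‖ := fbound e
      have h3 : ‖e‖ ≤ 1 := mem_closedBall_zero_iff.mp heF'.1
      rw [hfe] at h2; linarith
    -- the key orthogonality argument
    set z : X := w' - (f w') • e with hzdef
    have hfz : f z = 0 := by
      rw [hzdef, map_sub, map_smul, smul_eq_mul, hfe, mul_one, sub_self]
    have hBJ : BJOrth e z := by
      intro lam
      have : f (e + lam • z) = 1 := by
        rw [map_add, map_smul, smul_eq_mul, hfz, mul_zero, add_zero, hfe]
      calc ‖e‖ = 1 := he1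
        _ = f (e + lam • z) := this.symm
        _ ≤ ‖e + lam • z‖ := fbound _
    have hBJT : BJOrth (T e) (T z) := hpres e heB z hBJ
    have hTz : T z = -((f w') • T e) := by
      rw [hzdef, map_sub, hTw', map_smul, zero_sub]
    by_cases hfw : f w' = 0
    · -- contradiction with the norm of u₀
      have : f u₀ = ε * f v := by
        rw [hu₀def, map_add, hfw, zero_add, map_smul, smul_eq_mul]
      have hb : ε * f v ≤ ε * ‖v‖ := mul_le_mul_of_nonneg_left (fbound v) hε.le
      have hv3 : ε * ‖v‖ = 1/3 := by rw [hεdef]; field_simp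
      rw [hfu₀'] at this
      rw [hv3] at hb
      rw [this] at hu₀
      linarith
    · have h := hBJT (f w')⁻¹
      rw [hTz] at h
      have : T e + (f w')⁻¹ • -((f w') • T e) = 0 := by
        rw [smul_neg, smul_smul, inv_mul_cancel₀ hfw, one_smul, add_neg_cancel]
      rw [this, norm_zero] at h
      exact hTe (norm_le_zero_iff.mp h)
  have hinj : Function.Injective T := by
    intro a b hab
    have h1 : T (a - b) = 0 := by rw [map_sub, hab, sub_self]
    exact sub_eq_zero.mp (hker _ h1)
  refine ⟨hinj, ?_⟩
  exact (LinearMap.injective_iff_surjective_of_finrank_eq_finrank rfl).mp hinj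
end

section
/- Let X, Y be real normed spaces and T : X → Y a bounded linear operator preserving Birkhoff-James orthogonality at u, v ∈ S_X. If u and v lie on the same face F of the unit ball B_X (equivalently there is f ∈ X* with ‖f‖ = 1 and f(u) = f(v) = 1), then ‖Tu‖ = ‖Tv‖. -/
open Metric Filter Set

lemma bj_of_supp {X : Type*} [NormedAddCommGroup X] [NormedSpace ℝ X]
    (f : StrongDual ℝ X) (hf : ‖f‖ = 1) (u w : X)
    (hu : ‖u‖ = 1) (hfu : f u = 1) (hfw : f w = 0) : BJOrth u w := by
  intro lam
  have h := f.le_opNorm (u + lam • w)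
  simp [hfu, hfw, hf, hu] at h ⊢
  calc (1 : ℝ) = |f (u + lam • w)| := by simp [hfu, hfw]
    _ ≤ ‖u + lam • w‖ := by
        have := f.le_opNorm (u + lam • w); simpa [hf, Real.norm_eq_abs] using this

theorem stmt_14 {X Y : Type*} [NormedAddCommGroup X] [NormedSpace ℝ X]
    [NormedAddCommGroup Y] [NormedSpace ℝ Y] (T : X →L[ℝ] Y) (u v : X)
    (hu : ‖u‖ = 1) (hv : ‖v‖ = 1)
    (hpu : PreservesBJAt T u) (hpv : PreservesBJAt T v)
    (f : StrongDual ℝ X) (hf : ‖f‖ = 1) (hfu : f u = 1) (hfv : f v = 1) :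
    ‖T u‖ = ‖T v‖ := by
  have h1 : BJOrth u (v - u) := bj_of_supp f hf u (v - u) hu hfu (by simp [hfu, hfv])
  have h2 : BJOrth v (u - v) := bj_of_supp f hf v (u - v) hv hfv (by simp [hfu, hfv])
  have h1' := hpu (v - u) h1 1
  have h2' := hpv (u - v) h2 1
  simp [map_sub] at h1' h2'
  linarith
end

section
/- Let X be a real normed space, x ∈ X nonzero, and V a linear subspace of X. Then V ⊆ x^{⊥_B} (i.e., x ⊥_B v for every v ∈ V) if and only if there exists f ∈ J(x) with V ⊆ ker f. -/
open Metric Filter Set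

theorem stmt_15 {X : Type*} [NormedAddCommGroup X] [NormedSpace ℝ X]
    (x : X) (hx : x ≠ 0) (V : Submodule ℝ X) :
    (∀ v ∈ V, BJOrth x v) ↔ ∃ f ∈ SuppFunc x, ∀ v ∈ V, f v = 0 := by
  constructor
  · intro h
    set S := V.topologicalClosure with hS
    haveI : IsClosed (S : Set X) := V.isClosed_topologicalClosure
    -- every element of the closure still satisfies the inequality
    have hclos : ∀ w ∈ S, ‖x‖ ≤ ‖x + w‖ := by
      intro w hw
      have hsub : (V : Set X) ⊆ {w : X | ‖x‖ ≤ ‖x + w‖} := by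
        intro v hv
        simpa using h v hv 1
      have hcl : IsClosed {w : X | ‖x‖ ≤ ‖x + w‖} :=
        isClosed_le continuous_const ((continuous_const.add continuous_id).norm)
      have : closure (V : Set X) ⊆ {w : X | ‖x‖ ≤ ‖x + w‖} :=
        closure_minimal hsub hcl
      exact this (by rw [← Submodule.topologicalClosure_coe]; exact hw)
    -- norm of the image in the quotient equals ‖x‖
    have hnorm : ‖(Submodule.Quotient.mk x : X ⧸ S)‖ = ‖x‖ := by
      apply le_antisymm (Submodule.Quotient.norm_mk_le S x)
      have := quotient_norm_mk_eq S.toAddSubgroup x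
      rw [show ‖(Submodule.Quotient.mk x : X ⧸ S)‖ = ‖(QuotientAddGroup.mk' S.toAddSubgroup x : X ⧸ S.toAddSubgroup)‖
        from rfl, this]
      apply le_csInf
      · exact ⟨‖x + 0‖, Set.mem_image_of_mem _ S.zero_mem⟩
      · rintro b ⟨w, hw, rfl⟩
        exact hclos w hw
    have hne : (Submodule.Quotient.mk x : X ⧸ S) ≠ 0 := by
      rw [← norm_ne_zero_iff, hnorm]
      exact norm_ne_zero_iff.mpr hx
    obtain ⟨g, hg1, hgx⟩ := exists_dual_vector ℝ (Submodule.Quotient.mk x : X ⧸ S) (norm_ne_zero_iff.mpr hne)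
    -- the quotient map as a continuous linear map
    let q : X →L[ℝ] X ⧸ S := LinearMap.mkContinuous S.mkQ 1 (fun m => by
      simpa using Submodule.Quotient.norm_mk_le S m)
    have hq : ‖q‖ ≤ 1 := LinearMap.mkContinuous_norm_le _ zero_le_one _
    refine ⟨g.comp q, ⟨?_, ?_⟩, ?_⟩
    · apply le_antisymm
      · calc ‖g.comp q‖ ≤ ‖g‖ * ‖q‖ := ContinuousLinearMap.opNorm_comp_le g q
          _ ≤ 1 := by rw [hg1]; simpa using hq
      · have hfx : (g.comp q) x = ‖x‖ := by
          simp only [ContinuousLinearMap.comp_apply]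
          show g (Submodule.Quotient.mk x) = ‖x‖
          rw [hgx, hnorm]; rfl
        have := (g.comp q).le_opNorm x
        rw [hfx, Real.norm_of_nonneg (norm_nonneg x)] at this
        have hxpos : (0:ℝ) < ‖x‖ := norm_pos_iff.mpr hx
        nlinarith
    · simp only [ContinuousLinearMap.comp_apply]
      show g (Submodule.Quotient.mk x) = ‖x‖
      rw [hgx, hnorm]; rfl
    · intro v hv
      simp only [ContinuousLinearMap.comp_apply]
      show g (Submodule.Quotient.mk v) = 0
      have : (Submodule.Quotient.mk v : X ⧸ S) = 0 :=
        (Submodule.Quotient.mk_eq_zero S).mpr (Submodule.le_topologicalClosure V hv)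
      rw [this, map_zero]
  · rintro ⟨f, ⟨hf1, hfx⟩, hfV⟩ v hv lam
    have : ‖x‖ = f (x + lam • v) := by
      rw [map_add, map_smul, hfV v hv, smul_zero, add_zero, hfx]
    calc ‖x‖ = f (x + lam • v) := this
      _ ≤ ‖f (x + lam • v)‖ := by rw [Real.norm_eq_abs]; exact le_abs_self _
      _ ≤ ‖f‖ * ‖x + lam • v‖ := f.le_opNorm _
      _ = ‖x + lam • v‖ := by rw [hf1, one_mul]
end

section
/- Let X, Y be real normed spaces, F a face of the unit ball B_X supported by a norm-one functional f, and A ⊆ F. If a bounded linear operator T : X → Y preserves Birkhoff-James orthogonality at each point of A, then T preserves Birkhoff-James orthogonality at each point of the convex hull co(A). -/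
open Metric Filter Set

/-- James' characterization (one direction): if `‖x‖ = 1` and `x ⊥_B v`, there is a functional
`g` with `‖g‖ ≤ 1`, `g x = 1`, `g v = 0`. -/
lemma exists_support_orth {X : Type*} [NormedAddCommGroup X] [NormedSpace ℝ X]
    {x v : X} (hx : ‖x‖ = 1) (ho : BJOrth x v) :
    ∃ g : StrongDual ℝ X, ‖g‖ ≤ 1 ∧ g x = 1 ∧ g v = 0 := by
  set K : Submodule ℝ X := Submodule.span ℝ {v} with hK
  haveI : IsClosed (K : Set X) := Submodule.closed_of_finiteDimensional K
  have hmkx : ‖(Submodule.Quotient.mk x : X ⧸ K)‖ = 1 := by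
    refine le_antisymm (by simpa [hx] using Submodule.Quotient.norm_mk_le K x) ?_
    by_contra h
    push_neg at h
    obtain ⟨m, hm, hlt⟩ := Submodule.Quotient.norm_mk_lt (Submodule.Quotient.mk x : X ⧸ K)
      (sub_pos.mpr h)
    have hmem : m - x ∈ K := (Submodule.Quotient.eq K).mp hm
    obtain ⟨c, hc⟩ := Submodule.mem_span_singleton.mp hmem
    have : m = x + c • v := by rw [hc]; abel
    have h1 : (1 : ℝ) ≤ ‖m‖ := by rw [this, ← hx]; exact ho c
    linarith [hlt, h]
  have hne : (Submodule.Quotient.mk x : X ⧸ K) ≠ 0 := by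
    intro h; rw [h, norm_zero] at hmkx; norm_num at hmkx
  obtain ⟨G, hG1, hGx⟩ := exists_dual_vector ℝ (Submodule.Quotient.mk x : X ⧸ K) (norm_ne_zero_iff.mpr hne)
  refine ⟨LinearMap.mkContinuous (G.toLinearMap.comp K.mkQ) 1 (fun y => ?_), ?_, ?_, ?_⟩
  · calc ‖G (K.mkQ y)‖ ≤ ‖G‖ * ‖K.mkQ y‖ := G.le_opNorm _
      _ ≤ 1 * ‖y‖ := by
          rw [hG1]
          exact mul_le_mul_of_nonneg_left (Submodule.Quotient.norm_mk_le K y) zero_le_one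
  · exact LinearMap.mkContinuous_norm_le _ zero_le_one _
  · show G (K.mkQ x) = 1
    have : K.mkQ x = Submodule.Quotient.mk x := rfl
    rw [this, hGx, hmkx]; norm_num
  · show G (K.mkQ v) = 0
    have : K.mkQ v = 0 := (Submodule.Quotient.mk_eq_zero K).mpr
      (Submodule.mem_span_singleton_self v)
    rw [this, map_zero]

theorem stmt_16 {X Y : Type*} [NormedAddCommGroup X] [NormedSpace ℝ X]
    [NormedAddCommGroup Y] [NormedSpace ℝ Y] (T : X →L[ℝ] Y)
    (f : StrongDual ℝ X) (hf : ‖f‖ = 1)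
    (A : Set X) (hA : A ⊆ {x : X | ‖x‖ = 1 ∧ f x = 1})
    (hpres : ∀ x ∈ A, PreservesBJAt T x) :
    ∀ x ∈ convexHull ℝ A, PreservesBJAt T x := by
  set S : Set X := {x : X | (‖x‖ = 1 ∧ f x = 1) ∧ PreservesBJAt T x} with hS
  have hconv : Convex ℝ S := by
    intro a ha b hb t s ht hs hts
    rcases eq_or_lt_of_le ht with ht0 | ht0
    · have : s = 1 := by linarith
      simpa [← ht0, this] using hb
    rcases eq_or_lt_of_le hs with hs0 | hs0
    · have : t = 1 := by linarith
      simpa [← hs0, this] using ha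
    obtain ⟨⟨hna, hfa⟩, hpa⟩ := ha
    obtain ⟨⟨hnb, hfb⟩, hpb⟩ := hb
    set x := t • a + s • b with hxdef
    have hfx : f x = 1 := by
      simp only [hxdef, map_add, map_smul, smul_eq_mul, hfa, hfb]
      linarith
    have hnx : ‖x‖ = 1 := by
      have h1 : ‖x‖ ≤ 1 := by
        calc ‖x‖ ≤ ‖t • a‖ + ‖s • b‖ := norm_add_le _ _
          _ = t * ‖a‖ + s * ‖b‖ := by
              rw [norm_smul, norm_smul, Real.norm_eq_abs, Real.norm_eq_abs,
                abs_of_nonneg ht, abs_of_nonneg hs]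
          _ = 1 := by rw [hna, hnb]; linarith
      have h2 : (1 : ℝ) ≤ ‖x‖ := by
        calc (1 : ℝ) = f x := hfx.symm
          _ ≤ ‖f x‖ := le_abs_self _
          _ ≤ ‖f‖ * ‖x‖ := f.le_opNorm x
          _ = ‖x‖ := by rw [hf, one_mul]
      linarith
    refine ⟨⟨hnx, hfx⟩, ?_⟩
    intro v hv lam
    obtain ⟨g, hg1, hgx, hgv⟩ := exists_support_orth hnx hv
    -- g a = 1 and g b = 1
    have hga1 : g a ≤ 1 := by
      calc g a ≤ ‖g a‖ := le_abs_self _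
        _ ≤ ‖g‖ * ‖a‖ := g.le_opNorm a
        _ ≤ 1 := by rw [hna, mul_one]; exact hg1
    have hgb1 : g b ≤ 1 := by
      calc g b ≤ ‖g b‖ := le_abs_self _
        _ ≤ ‖g‖ * ‖b‖ := g.le_opNorm b
        _ ≤ 1 := by rw [hnb, mul_one]; exact hg1
    have hsum : t * g a + s * g b = 1 := by
      have : g x = 1 := hgx
      simpa [hxdef, map_add, map_smul, smul_eq_mul] using this
    have hga : g a = 1 := by nlinarith
    have hgb : g b = 1 := by nlinarith
    -- key bound: for any point p ∈ {a, b}, ‖T x + lam • T v‖ ≥ ‖T p‖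
    have key : ∀ p : X, ‖p‖ = 1 → g p = 1 → PreservesBJAt T p →
        ‖T p‖ ≤ ‖T x + lam • T v‖ := by
      intro p hnp hgp hpp
      set w := (x - p) + lam • v with hw
      have horth : BJOrth p w := by
        intro mu
        have hgw : g w = 0 := by
          simp only [hw, map_add, map_sub, map_smul, smul_eq_mul, hgx, hgp, hgv]
          ring
        calc ‖p‖ = 1 := hnp
          _ = g (p + mu • w) := by
              simp only [map_add, map_smul, smul_eq_mul, hgp, hgw]; ring
          _ ≤ ‖g (p + mu • w)‖ := le_abs_self _
          _ ≤ ‖g‖ * ‖p + mu • w‖ := g.le_opNorm _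
          _ ≤ 1 * ‖p + mu • w‖ := mul_le_mul_of_nonneg_right hg1 (norm_nonneg _)
          _ = ‖p + mu • w‖ := one_mul _
      have := hpp w horth 1
      have heq : T p + (1 : ℝ) • T w = T x + lam • T v := by
        rw [one_smul, ← map_add, ← map_smul, ← map_add]
        congr 1
        rw [hw]; abel
      rwa [heq] at this
    have hka := key a hna hga hpa
    have hkb := key b hnb hgb hpb
    calc ‖T x‖ = ‖t • T a + s • T b‖ := by
          rw [hxdef]; rw [map_add, map_smul, map_smul]
      _ ≤ ‖t • T a‖ + ‖s • T b‖ := norm_add_le _ _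
      _ = t * ‖T a‖ + s * ‖T b‖ := by
          rw [norm_smul, norm_smul, Real.norm_eq_abs, Real.norm_eq_abs,
            abs_of_nonneg ht, abs_of_nonneg hs]
      _ ≤ t * ‖T x + lam • T v‖ + s * ‖T x + lam • T v‖ := by
          gcongr
      _ = ‖T x + lam • T v‖ := by rw [← add_mul, hts, one_mul]
  have hsub : A ⊆ S := fun a ha => ⟨hA ha, hpres a ha⟩
  intro x hx
  exact (convexHull_min hsub hconv hx).2
end
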